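/- Let a₀, …, a_k be real numbers and 0 = n₀ < n₁ < ⋯ < n_k integers. If the polynomial p(z) = ∑_{j=0}^k a_j z^{n_j} has a zero on the unit circle, then the quadratic form Q(x) = ∑_{n∈ℤ} (∑_{j=0}^k a_j x_{n+n_j})² is not strongly positive definite: for every c > 0 there exists x ∈ ℓ²(ℤ) with x ≠ 0 and Q(x) < c ‖x‖². -/

import Mathlib

open Finset

lemma aux_key (k : ℕ) (n : Fin (k + 1) → ℤ) (a : Fin (k + 1) → ℝ) (z : ℂ)
    (hz0 : z ≠ 0) (hz : ‖z‖ = 1)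
    (hpz : ∑ j : Fin (k + 1), (a j : ℂ) * z ^ (n j) = 0)
    (hnonneg : ∀ j, 0 ≤ n j) (hle : ∀ j, n j ≤ n (Fin.last k))
    (f : ℂ →ₗ[ℝ] ℝ) (hf : ∀ w, |f w| ≤ ‖w‖) (N : ℕ) (hLN : n (Fin.last k) ≤ (N : ℤ)) :
    Summable (fun m : ℤ =>
      ((if m ∈ Finset.Ico (0:ℤ) (N:ℤ) then f (z ^ m) else 0) : ℝ) ^ 2) ∧
    (∑' m : ℤ, ((if m ∈ Finset.Ico (0:ℤ) (N:ℤ) then f (z ^ m) else 0) : ℝ) ^ 2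
        = ∑ m ∈ Finset.Ico (0:ℤ) (N:ℤ), (f (z ^ m)) ^ 2) ∧
    ∑' m : ℤ, (∑ j : Fin (k+1), a j *
        (if m + n j ∈ Finset.Ico (0:ℤ) (N:ℤ) then f (z ^ (m + n j)) else 0)) ^ 2
      ≤ 2 * ((n (Fin.last k)).toNat : ℝ) * (∑ j : Fin (k+1), |a j|) ^ 2 := by
  set L : ℤ := n (Fin.last k) with hLdef
  have hL0 : 0 ≤ L := hnonneg _
  set x : ℤ → ℝ := fun m => if m ∈ Finset.Ico (0:ℤ) (N:ℤ) then f (z ^ m) else 0 with hxdef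
  set A : ℝ := ∑ j : Fin (k+1), |a j| with hAdef
  have hA0 : 0 ≤ A := Finset.sum_nonneg fun j _ => abs_nonneg _
  have hxzero : ∀ t, t ∉ Finset.Ico (0:ℤ) (N:ℤ) → x t = 0 := by
    intro t ht; simp only [hxdef, if_neg ht]
  have hxbound : ∀ t, |x t| ≤ 1 := by
    intro t
    by_cases ht : t ∈ Finset.Ico (0:ℤ) (N:ℤ)
    · simp only [hxdef, if_pos ht]
      calc |f (z ^ t)| ≤ ‖z ^ t‖ := hf _
        _ = 1 := by rw [norm_zpow, hz, one_zpow]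
    · rw [hxzero t ht]; simp
  have hsummable : Summable (fun m : ℤ => (x m) ^ 2) := by
    apply summable_of_ne_finset_zero (s := Finset.Ico (0:ℤ) (N:ℤ))
    intro m hm; rw [hxzero m hm]; ring
  refine ⟨hsummable, ?_, ?_⟩
  · rw [tsum_eq_sum (s := Finset.Ico (0:ℤ) (N:ℤ))
      (fun m hm => by rw [if_neg hm]; ring)]
    refine Finset.sum_congr rfl fun m hm => ?_
    simp only [hxdef, if_pos hm]
  -- the quadratic form bound
  set S : ℤ → ℝ := fun m => ∑ j : Fin (k+1), a j * x (m + n j) with hSdef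
  set T : Finset ℤ := Finset.Ico (-L) 0 ∪ Finset.Ico ((N:ℤ) - L) (N:ℤ) with hTdef
  have hS0 : ∀ m ∉ T, S m = 0 := by
    intro m hm
    simp only [hTdef, Finset.mem_union, Finset.mem_Ico, not_or, not_and, not_lt] at hm
    rcases lt_or_ge m 0 with hm0 | hm0
    · -- m < 0 and m ∉ Ico(-L) 0, so m < -L
      have hmL : m < -L := by
        by_contra h
        push_neg at h
        exact absurd (hm.1 h) (not_le.2 hm0)
      apply Finset.sum_eq_zero
      intro j _
      rw [hxzero (m + n j) (by
        simp only [Finset.mem_Ico, not_and, not_lt]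
        intro h; exfalso; linarith [hle j])]
      ring
    · rcases lt_or_ge m ((N:ℤ) - L) with hm1 | hm1
      · -- interior case
        have hArg : ∀ j, m + n j ∈ Finset.Ico (0:ℤ) (N:ℤ) := fun j =>
          Finset.mem_Ico.2 ⟨by linarith [hnonneg j], by linarith [hle j]⟩
        have h1 : S m = ∑ j : Fin (k+1), a j * f (z ^ (m + n j)) := by
          refine Finset.sum_congr rfl fun j _ => ?_
          simp only [hxdef, if_pos (hArg j)]
        have h2 : (∑ j : Fin (k+1), (a j) • z ^ (m + n j)) = 0 := by
          have : ∀ j : Fin (k+1), (a j) • z ^ (m + n j)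
              = z ^ m * ((a j : ℂ) * z ^ (n j)) := by
            intro j
            rw [zpow_add₀ hz0, Complex.real_smul]; ring
          rw [Finset.sum_congr rfl fun j _ => this j, ← Finset.mul_sum, hpz, mul_zero]
        rw [h1]
        calc (∑ j : Fin (k+1), a j * f (z ^ (m + n j)))
            = f (∑ j : Fin (k+1), (a j) • z ^ (m + n j)) := by
              rw [map_sum]
              exact Finset.sum_congr rfl fun j _ => by rw [map_smul, smul_eq_mul]
          _ = 0 := by rw [h2, map_zero]
      · -- m ≥ N - L and m ∉ Ico (N-L) N, so m ≥ N
        have hmN : (N:ℤ) ≤ m := hm.2 hm1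
        apply Finset.sum_eq_zero
        intro j _
        rw [hxzero (m + n j) (by
          simp only [Finset.mem_Ico, not_and, not_lt]
          intro h; linarith [hnonneg j])]
        ring
  have hSbound : ∀ m, (S m) ^ 2 ≤ A ^ 2 := by
    intro m
    have habs : |S m| ≤ A := by
      calc |S m| ≤ ∑ j : Fin (k+1), |a j * x (m + n j)| := Finset.abs_sum_le_sum_abs _ _
        _ ≤ ∑ j : Fin (k+1), |a j| := by
            refine Finset.sum_le_sum fun j _ => ?_
            rw [abs_mul]
            exact mul_le_of_le_one_right (abs_nonneg _) (hxbound _)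
    calc (S m) ^ 2 = |S m| ^ 2 := (sq_abs _).symm
      _ ≤ A ^ 2 := by
          have := abs_nonneg (S m)
          nlinarith
  have hcard : (T.card : ℝ) ≤ 2 * (L.toNat : ℝ) := by
    have h1 : T.card ≤ (Finset.Ico (-L) 0).card + (Finset.Ico ((N:ℤ) - L) (N:ℤ)).card :=
      Finset.card_union_le _ _
    have h2 : (Finset.Ico (-L) 0).card = L.toNat := by
      rw [Int.card_Ico]; congr 1; ring
    have h3 : (Finset.Ico ((N:ℤ) - L) (N:ℤ)).card = L.toNat := by
      rw [Int.card_Ico]; congr 1; ring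
    rw [h2, h3] at h1
    calc (T.card : ℝ) ≤ ((L.toNat + L.toNat : ℕ) : ℝ) := by exact_mod_cast h1
      _ = 2 * (L.toNat : ℝ) := by push_cast; ring
  calc ∑' m : ℤ, (S m) ^ 2 = ∑ m ∈ T, (S m) ^ 2 :=
        tsum_eq_sum (fun m hm => by rw [hS0 m hm]; ring)
    _ ≤ ∑ _m ∈ T, A ^ 2 := Finset.sum_le_sum fun m _ => hSbound m
    _ = (T.card : ℝ) * A ^ 2 := by rw [Finset.sum_const, nsmul_eq_mul]
    _ ≤ 2 * (L.toNat : ℝ) * A ^ 2 := by nlinarith [sq_nonneg A]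

/-- If `p(z) = ∑_{j=0}^k a_j z^{n_j}` has a zero on the unit circle, then the quadratic form
`Q(x) = ∑_{n∈ℤ} (∑_j a_j x_{n+n_j})²` is not strongly positive definite: for every `c > 0`
there is a nonzero `x ∈ ℓ²(ℤ)` with `Q(x) < c‖x‖²`. -/
theorem stmt_12 (k : ℕ) (n : Fin (k + 1) → ℤ) (a : Fin (k + 1) → ℝ)
    (hn0 : n 0 = 0) (hmono : StrictMono n)
    (hp : ∃ z : ℂ, ‖z‖ = 1 ∧ ∑ j : Fin (k + 1), (a j : ℂ) * z ^ (n j) = 0) :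
    ∀ c : ℝ, 0 < c →
      ∃ x : ℤ → ℝ, Summable (fun m : ℤ => (x m) ^ 2) ∧ x ≠ 0 ∧
        ∑' m : ℤ, (∑ j : Fin (k + 1), a j * x (m + n j)) ^ 2 <
          c * ∑' m : ℤ, (x m) ^ 2 := by
  intro c hc
  obtain ⟨z, hz, hpz⟩ := hp
  have hz0 : z ≠ 0 := by
    intro h; rw [h, norm_zero] at hz; norm_num at hz
  have hnonneg : ∀ j, 0 ≤ n j := fun j => hn0 ▸ hmono.monotone (Fin.zero_le j)
  have hle : ∀ j, n j ≤ n (Fin.last k) := fun j => hmono.monotone (Fin.le_last j)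
  set L : ℕ := (n (Fin.last k)).toNat with hLdef
  have hLcast : (L : ℤ) = n (Fin.last k) := Int.toNat_of_nonneg (hnonneg _)
  set A : ℝ := ∑ j : Fin (k+1), |a j| with hAdef
  have hA0 : 0 ≤ A := Finset.sum_nonneg fun j _ => abs_nonneg _
  obtain ⟨N, hN⟩ := exists_nat_gt (4 * (L:ℝ) * A ^ 2 / c + L)
  have hterm0 : 0 ≤ 4 * (L:ℝ) * A ^ 2 / c := by positivity
  have hLN : n (Fin.last k) ≤ (N : ℤ) := by
    have h1 : (L : ℝ) < N := by linarith
    have : L < N := by exact_mod_cast h1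
    rw [← hLcast]; exact_mod_cast this.le
  have hNpos : (0:ℝ) < N := by
    have : (0:ℝ) ≤ (L:ℝ) := Nat.cast_nonneg _
    linarith
  have hQbound : 2 * (L:ℝ) * A ^ 2 < c * N / 2 := by
    have h1 : 4 * (L:ℝ) * A ^ 2 / c < N := by linarith [Nat.cast_nonneg (α := ℝ) L]
    have h2 : 4 * (L:ℝ) * A ^ 2 < N * c := (div_lt_iff₀ hc).1 h1
    nlinarith
  have hre : ∀ w : ℂ, |Complex.reLm w| ≤ ‖w‖ := fun w => by
    simpa using Complex.abs_re_le_norm w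
  have him : ∀ w : ℂ, |Complex.imLm w| ≤ ‖w‖ := fun w => by
    simpa using Complex.abs_im_le_norm w
  obtain ⟨hsum_re, htsum_re, hQ_re⟩ :=
    aux_key k n a z hz0 hz hpz hnonneg hle Complex.reLm hre N hLN
  obtain ⟨hsum_im, htsum_im, hQ_im⟩ :=
    aux_key k n a z hz0 hz hpz hnonneg hle Complex.imLm him N hLN
  set Sre : ℝ := ∑ m ∈ Finset.Ico (0:ℤ) (N:ℤ), (Complex.reLm (z ^ m)) ^ 2 with hSre
  set Sim : ℝ := ∑ m ∈ Finset.Ico (0:ℤ) (N:ℤ), (Complex.imLm (z ^ m)) ^ 2 with hSim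
  have htotal : Sre + Sim = N := by
    rw [hSre, hSim, ← Finset.sum_add_distrib]
    have h1 : ∀ m ∈ Finset.Ico (0:ℤ) (N:ℤ),
        (Complex.reLm (z ^ m)) ^ 2 + (Complex.imLm (z ^ m)) ^ 2 = 1 := by
      intro m _
      have habs : ‖z ^ m‖ = 1 := by
        rw [norm_zpow, hz, one_zpow]
      have h2 : ‖z ^ m‖ ^ 2 = Complex.normSq (z ^ m) := Complex.sq_norm _
      rw [habs] at h2
      simp only [Complex.reLm_coe, Complex.imLm_coe]
      rw [Complex.normSq_apply] at h2
      nlinarith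
    rw [Finset.sum_congr rfl h1, Finset.sum_const, nsmul_eq_mul, mul_one]
    congr 1
    rw [Int.card_Ico]
    simp
  rcases le_total Sre Sim with hcase | hcase
  · -- use imaginary part
    have hSimN : (N:ℝ) / 2 ≤ Sim := by linarith
    refine ⟨fun m => if m ∈ Finset.Ico (0:ℤ) (N:ℤ) then Complex.imLm (z ^ m) else 0,
      hsum_im, ?_, ?_⟩
    · intro h0
      have hz' : Sim = 0 := by
        rw [← htsum_im]
        have : ∀ m : ℤ,
            ((if m ∈ Finset.Ico (0:ℤ) (N:ℤ) then Complex.imLm (z ^ m) else 0) : ℝ) = 0 :=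
          fun m => congrFun h0 m
        simp only [this]
        simp
      linarith
    · calc ∑' m : ℤ, (∑ j : Fin (k+1), a j *
            (if m + n j ∈ Finset.Ico (0:ℤ) (N:ℤ) then Complex.imLm (z ^ (m + n j)) else 0)) ^ 2
          ≤ 2 * (L:ℝ) * A ^ 2 := hQ_im
        _ < c * N / 2 := hQbound
        _ ≤ c * Sim := by nlinarith
        _ = c * ∑' m : ℤ,
            ((if m ∈ Finset.Ico (0:ℤ) (N:ℤ) then Complex.imLm (z ^ m) else 0) : ℝ) ^ 2 := by
            rw [htsum_im]
  · -- use real part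
    have hSreN : (N:ℝ) / 2 ≤ Sre := by linarith
    refine ⟨fun m => if m ∈ Finset.Ico (0:ℤ) (N:ℤ) then Complex.reLm (z ^ m) else 0,
      hsum_re, ?_, ?_⟩
    · intro h0
      have hz' : Sre = 0 := by
        rw [← htsum_re]
        have : ∀ m : ℤ,
            ((if m ∈ Finset.Ico (0:ℤ) (N:ℤ) then Complex.reLm (z ^ m) else 0) : ℝ) = 0 :=
          fun m => congrFun h0 m
        simp only [this]
        simp
      linarith
    · calc ∑' m : ℤ, (∑ j : Fin (k+1), a j *
            (if m + n j ∈ Finset.Ico (0:ℤ) (N:ℤ) then Complex.reLm (z ^ (m + n j)) else 0)) ^ 2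
          ≤ 2 * (L:ℝ) * A ^ 2 := hQ_re
        _ < c * N / 2 := hQbound
        _ ≤ c * Sre := by nlinarith
        _ = c * ∑' m : ℤ,
            ((if m ∈ Finset.Ico (0:ℤ) (N:ℤ) then Complex.reLm (z ^ m) else 0) : ℝ) ^ 2 := by
            rw [htsum_re]
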